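/- If 𝔘 is a symmetrically pseudo-amenable Banach algebra and z ≠ 0 is an element of the center Z(𝔘), then there is a net {f_λ} of bounded linear functionals on 𝔘 such that f_λ(ab − ba) → 0 for all a, b ∈ 𝔘 and f_λ(z) → 1. -/

import Mathlib

open Filter Topology

universe u

/-- A realization of the projective Banach-space tensor square `A ⊗̂ A` of a (non-unital)
Banach algebra `A`, together with the canonical bimodule operations `a•t`, `t•a`, the
"opposite" operations `a∘t`, `t∘a`, the product maps `π`, `π°` and the flip map, each
characterized by its values on elementary tensors.  The norm is the projective tensor norm:
`‖a ⊗ b‖ ≤ ‖a‖‖b‖` and every element is an absolutely convergent sum of elementary tensors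
whose total norm is arbitrarily close to its norm; moreover bounded bilinear maps lift. -/
structure ProjTensorSquare (A : Type u) [NonUnitalNormedRing A] [NormedSpace ℂ A]
    [IsScalarTower ℂ A A] [SMulCommClass ℂ A A] [CompleteSpace A] where
  /-- the underlying Banach space of `A ⊗̂ A` -/
  T : Type u
  [nacg : NormedAddCommGroup T]
  [nsp : NormedSpace ℂ T]
  [cplt : CompleteSpace T]
  /-- the canonical bilinear map `(a, b) ↦ a ⊗ b` -/
  tmul : A →L[ℂ] A →L[ℂ] T
  norm_tmul_le : ∀ a b : A, ‖tmul a b‖ ≤ ‖a‖ * ‖b‖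
  /-- the projective norm property -/
  exists_rep : ∀ (t : T) (ε : ℝ), 0 < ε → ∃ u v : ℕ → A,
      Summable (fun n => ‖u n‖ * ‖v n‖) ∧ HasSum (fun n => tmul (u n) (v n)) t ∧
      ∑' n, ‖u n‖ * ‖v n‖ ≤ ‖t‖ + ε
  /-- the universal property: bounded bilinear maps into a Banach space lift to `T` -/
  lift : ∀ {X : Type u} [NormedAddCommGroup X] [NormedSpace ℂ X] [CompleteSpace X]
      (f : A →L[ℂ] A →L[ℂ] X), ∃ g : T →L[ℂ] X, (∀ a b, g (tmul a b) = f a b) ∧ ‖g‖ ≤ ‖f‖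
  /-- the left module action: `a • (b ⊗ c) = (a * b) ⊗ c` -/
  lmul : A → T →L[ℂ] T
  lmul_tmul : ∀ a b c, lmul a (tmul b c) = tmul (a * b) c
  /-- the right module action: `(b ⊗ c) • a = b ⊗ (c * a)` -/
  rmul : A → T →L[ℂ] T
  rmul_tmul : ∀ a b c, rmul a (tmul b c) = tmul b (c * a)
  /-- the left opposite action: `a ∘ (b ⊗ c) = b ⊗ (a * c)` -/
  lcirc : A → T →L[ℂ] T
  lcirc_tmul : ∀ a b c, lcirc a (tmul b c) = tmul b (a * c)
  /-- the right opposite action: `(b ⊗ c) ∘ a = (b * a) ⊗ c` -/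
  rcirc : A → T →L[ℂ] T
  rcirc_tmul : ∀ a b c, rcirc a (tmul b c) = tmul (b * a) c
  /-- the product map `π : b ⊗ c ↦ b * c` -/
  π : T →L[ℂ] A
  π_tmul : ∀ b c, π (tmul b c) = b * c
  /-- the opposite product map `π° : b ⊗ c ↦ c * b` -/
  πop : T →L[ℂ] A
  πop_tmul : ∀ b c, πop (tmul b c) = c * b
  /-- the flip map `(b ⊗ c)° = c ⊗ b` -/
  flip : T →L[ℂ] T
  flip_tmul : ∀ b c, flip (tmul b c) = tmul c b

attribute [instance] ProjTensorSquare.nacg ProjTensorSquare.nsp ProjTensorSquare.cplt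

namespace ProjTensorSquare

variable {A : Type u} [NonUnitalNormedRing A] [NormedSpace ℂ A]
    [IsScalarTower ℂ A A] [SMulCommClass ℂ A A] [CompleteSpace A]

/-- `t` is an approximate diagonal for `A` consisting of symmetric tensors, along the
filter `l`:  each `t i` is symmetric, `a • tᵢ - tᵢ • a → 0` and `π(tᵢ) a → a` for all `a`. -/
def IsSymmApproxDiagonal (P : ProjTensorSquare A) {ι : Type u} (l : Filter ι)
    (t : ι → P.T) : Prop :=
  (∀ i, P.flip (t i) = t i) ∧
  (∀ a : A, Tendsto (fun i => P.lmul a (t i) - P.rmul a (t i)) l (𝓝 0)) ∧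
  (∀ a : A, Tendsto (fun i => P.π (t i) * a) l (𝓝 a))

/-- A Banach algebra is symmetrically pseudo-amenable if it has a (not necessarily bounded)
approximate diagonal consisting of symmetric tensors. -/
def SymmPseudoAmenable (P : ProjTensorSquare A) : Prop :=
  ∃ (ι : Type u) (l : Filter ι) (t : ι → P.T), l.NeBot ∧ P.IsSymmApproxDiagonal l t

end ProjTensorSquare

section Aux

universe v

variable {A : Type u} [NonUnitalNormedRing A] [NormedSpace ℂ A]
    [IsScalarTower ℂ A A] [SMulCommClass ℂ A A] [CompleteSpace A]

theorem ProjTensorSquare.ext_tmul (P : ProjTensorSquare A) {X : Type v}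
    [NormedAddCommGroup X] [NormedSpace ℂ X] (g g' : P.T →L[ℂ] X)
    (hgg : ∀ a b, g (P.tmul a b) = g' (P.tmul a b)) (t : P.T) : g t = g' t := by
  obtain ⟨u, w, -, hhs, -⟩ := P.exists_rep t 1 one_pos
  have h2 : HasSum (fun n => g (P.tmul (u n) (w n))) (g' t) := by
    simpa only [hgg] using g'.hasSum hhs
  exact (g.hasSum hhs).unique h2

/-- The bounded bilinear map `(u, v) ↦ (a ↦ φ (u * a * v))`. -/
noncomputable def trilin (φ : A →L[ℂ] ℂ) : A →L[ℂ] A →L[ℂ] (A →L[ℂ] ℂ) :=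
  LinearMap.mkContinuous₂
    (LinearMap.mk₂ ℂ
      (fun x y => φ.comp (((ContinuousLinearMap.mul ℂ A).flip y).comp
        (ContinuousLinearMap.mul ℂ A x)))
      (fun x x' y => by ext a; simp [add_mul, mul_add])
      (fun c x y => by ext a; simp [smul_mul_assoc])
      (fun x y y' => by ext a; simp [mul_add])
      (fun c x y => by ext a; simp [mul_smul_comm]))
    ‖φ‖
    (fun x y => by
      refine ContinuousLinearMap.opNorm_le_bound _ (by positivity) (fun a => ?_)
      simp only [LinearMap.mk₂_apply, ContinuousLinearMap.comp_apply,
        ContinuousLinearMap.flip_apply, ContinuousLinearMap.mul_apply']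
      have hb : ‖x * a * y‖ ≤ ‖x‖ * ‖a‖ * ‖y‖ :=
        le_trans (norm_mul_le _ _)
          (mul_le_mul_of_nonneg_right (norm_mul_le _ _) (norm_nonneg _))
      calc ‖φ (x * a * y)‖ ≤ ‖φ‖ * ‖x * a * y‖ := φ.le_opNorm _
        _ ≤ ‖φ‖ * (‖x‖ * ‖a‖ * ‖y‖) :=
            mul_le_mul_of_nonneg_left hb (norm_nonneg _)
        _ = ‖φ‖ * ‖x‖ * ‖y‖ * ‖a‖ := by ring)

omit [CompleteSpace A] in
theorem trilin_apply (φ : A →L[ℂ] ℂ) (x y a : A) : trilin φ x y a = φ (x * a * y) := rfl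

end Aux

/-- If `𝔘` is a symmetrically pseudo-amenable Banach algebra and `z ≠ 0` is an
element of the center `Z(𝔘)`, then there is a net `{f_λ}` of bounded linear functionals on `𝔘`
such that `f_λ(ab − ba) → 0` for all `a, b ∈ 𝔘` and `f_λ(z) → 1`. -/
theorem exists_approx_trace_functional {A : Type u} [NonUnitalNormedRing A] [NormedSpace ℂ A]
    [IsScalarTower ℂ A A] [SMulCommClass ℂ A A] [CompleteSpace A] (P : ProjTensorSquare A)
    (h : P.SymmPseudoAmenable) (z : A) (hz : z ≠ 0) (hzc : ∀ a : A, z * a = a * z) :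
    ∃ (ι : Type u) (l : Filter ι) (f : ι → A →L[ℂ] ℂ), l.NeBot ∧
      (∀ a b : A, Tendsto (fun i => f i (a * b - b * a)) l (𝓝 0)) ∧
      Tendsto (fun i => f i z) l (𝓝 1) := by
  obtain ⟨ι, l, t, hne, hflip, hdiag, hπl⟩ := h
  obtain ⟨g0, hg0, hg0z⟩ := exists_dual_vector ℂ z (norm_ne_zero_iff.mpr hz)
  set φ : A →L[ℂ] ℂ := (‖z‖ : ℂ)⁻¹ • g0 with hφ
  have hznz : (‖z‖ : ℂ) ≠ 0 := by exact_mod_cast norm_ne_zero_iff.mpr hz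
  have hφz : φ z = 1 := by
    simp [hφ, hg0z, inv_mul_cancel₀ hznz]
  obtain ⟨G, hG, -⟩ := P.lift (trilin φ)
  refine ⟨ι, l, fun i => G (t i), hne, ?_, ?_⟩
  · intro a b
    have e1 : ∀ s : P.T, G s (a * b) = φ (P.π (P.lcirc b (P.rcirc a s))) := by
      refine P.ext_tmul ((ContinuousLinearMap.apply ℂ ℂ (a * b)).comp G)
        ((φ.comp P.π).comp ((P.lcirc b).comp (P.rcirc a))) (fun u w => ?_)
      simp [hG, trilin_apply, P.rcirc_tmul, P.lcirc_tmul, P.π_tmul, mul_assoc]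
    have e2 : ∀ s : P.T, G s (b * a) = φ (P.π (P.lcirc b (P.lcirc a s))) := by
      refine P.ext_tmul ((ContinuousLinearMap.apply ℂ ℂ (b * a)).comp G)
        ((φ.comp P.π).comp ((P.lcirc b).comp (P.lcirc a))) (fun u w => ?_)
      simp [hG, trilin_apply, P.lcirc_tmul, P.π_tmul, mul_assoc]
    have eflip1 : ∀ s : P.T, P.flip (P.lmul a s) = P.lcirc a (P.flip s) :=
      P.ext_tmul (P.flip.comp (P.lmul a)) ((P.lcirc a).comp P.flip)
        (fun u w => by simp [P.lmul_tmul, P.flip_tmul, P.lcirc_tmul])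
    have eflip2 : ∀ s : P.T, P.flip (P.rmul a s) = P.rcirc a (P.flip s) :=
      P.ext_tmul (P.flip.comp (P.rmul a)) ((P.rcirc a).comp P.flip)
        (fun u w => by simp [P.rmul_tmul, P.flip_tmul, P.rcirc_tmul])
    have key : Tendsto (fun i => P.lcirc a (t i) - P.rcirc a (t i)) l (𝓝 0) := by
      have h0 : Tendsto (fun i => P.flip (P.lmul a (t i) - P.rmul a (t i))) l
          (𝓝 (P.flip 0)) := (P.flip.continuous.tendsto 0).comp (hdiag a)
      rw [map_zero] at h0
      refine h0.congr (fun i => ?_)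
      rw [map_sub, eflip1, eflip2, hflip]
    set H : P.T →L[ℂ] ℂ := (φ.comp P.π).comp (P.lcirc b) with hH
    have h1 : Tendsto (fun i => H (P.lcirc a (t i) - P.rcirc a (t i))) l (𝓝 (H 0)) :=
      (H.continuous.tendsto 0).comp key
    rw [map_zero] at h1
    have h2 := h1.neg
    rw [neg_zero] at h2
    refine h2.congr (fun i => ?_)
    rw [map_sub]
    simp only [hH, ContinuousLinearMap.comp_apply]
    rw [map_sub, e1, e2]
    ring
  · have e3 : ∀ s : P.T, G s z = φ (P.π s * z) := by
      refine P.ext_tmul ((ContinuousLinearMap.apply ℂ ℂ z).comp G)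
        ((φ.comp ((ContinuousLinearMap.mul ℂ A).flip z)).comp P.π) (fun u w => ?_)
      simp only [ContinuousLinearMap.comp_apply, ContinuousLinearMap.apply_apply, hG,
        trilin_apply, P.π_tmul, ContinuousLinearMap.flip_apply,
        ContinuousLinearMap.mul_apply']
      rw [mul_assoc, hzc w, ← mul_assoc]
    have h1 : Tendsto (fun i => φ (P.π (t i) * z)) l (𝓝 (φ z)) :=
      (φ.continuous.tendsto z).comp (hπl z)
    rw [hφz] at h1
    exact h1.congr (fun i => (e3 (t i)).symm)
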